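/- Let γ > 1 and let α satisfy α > 0 or α < −γ. Define, on the open set of conserved variables u = (u₁, u₂, u₃) ∈ ℝ³ with u₁ > 0 and (γ−1)(u₃ − u₂²/(2u₁)) > 0, Harten's entropy U(u) = −((γ+α)/(γ−1)) · u₁ · (p/u₁^γ)^{1/(α+γ)}, where ρ = u₁, v = u₂/u₁, and p = (γ−1)(u₃ − u₂²/(2u₁)). Then U is differentiable at every such u and its gradient equals the entropy variables: U′(u) = (ρ/p)(p/ρ^γ)^{1/(α+γ)} · (−(α/(γ−1))·(p/ρ) − v²/2, v, −1). -/

import Mathlib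

set_option maxHeartbeats 2000000

open Real InnerProductSpace

noncomputable def pr (i : Fin 3) : EuclideanSpace ℝ (Fin 3) →L[ℝ] ℝ := EuclideanSpace.proj i

/-- Harten's entropy `U(u) = -((γ+α)/(γ-1)) ρ (p/ρ^γ)^(1/(α+γ))`, viewed as a
function of the conserved variables `u = (ρ, ρv, ρe)` with
`ρ = u 0`, `v = u 1 / u 0`, `p = (γ-1)(u 2 - (u 1)²/(2 u 0))`, is
differentiable at every admissible `u` (`ρ > 0`, `p > 0`) and its gradient is
the vector of entropy variables
`w = (ρ/p)(p/ρ^γ)^(1/(α+γ)) ⋅ (-(α/(γ-1))(p/ρ) - v²/2, v, -1)`. -/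
theorem harten_entropy_hasGradientAt
    (γ α : ℝ) (hγ : 1 < γ) (hα : 0 < α ∨ α < -γ)
    (u : EuclideanSpace ℝ (Fin 3))
    (hρ : 0 < u 0)
    (hp : 0 < (γ - 1) * (u 2 - (u 1) ^ 2 / (2 * u 0))) :
    HasGradientAt
      (fun x : EuclideanSpace ℝ (Fin 3) =>
        -((γ + α) / (γ - 1)) * x 0 *
          ((γ - 1) * (x 2 - (x 1) ^ 2 / (2 * x 0)) / (x 0) ^ γ) ^ (1 / (α + γ)))
      ((WithLp.equiv 2 (Fin 3 → ℝ)).symm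
        ![u 0 / ((γ - 1) * (u 2 - (u 1) ^ 2 / (2 * u 0))) *
            ((γ - 1) * (u 2 - (u 1) ^ 2 / (2 * u 0)) / (u 0) ^ γ) ^ (1 / (α + γ)) *
            (-(α / (γ - 1)) * ((γ - 1) * (u 2 - (u 1) ^ 2 / (2 * u 0)) / u 0)
              - (u 1 / u 0) ^ 2 / 2),
          u 0 / ((γ - 1) * (u 2 - (u 1) ^ 2 / (2 * u 0))) *
            ((γ - 1) * (u 2 - (u 1) ^ 2 / (2 * u 0)) / (u 0) ^ γ) ^ (1 / (α + γ)) *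
            (u 1 / u 0),
          u 0 / ((γ - 1) * (u 2 - (u 1) ^ 2 / (2 * u 0))) *
            ((γ - 1) * (u 2 - (u 1) ^ 2 / (2 * u 0)) / (u 0) ^ γ) ^ (1 / (α + γ)) *
            (-1)])
      u := by
  have hγ1 : (0:ℝ) < γ - 1 := by linarith
  have hαγ : α + γ ≠ 0 := by rcases hα with h | h <;> intro hc <;> nlinarith
  set s : ℝ := 1 / (α + γ) with hs
  set c : ℝ := -((γ + α) / (γ - 1)) with hc
  -- coordinate derivatives
  have h0 : HasFDerivAt (fun x : EuclideanSpace ℝ (Fin 3) => x 0) (pr 0) u := (pr 0).hasFDerivAt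
  have h1 : HasFDerivAt (fun x : EuclideanSpace ℝ (Fin 3) => x 1) (pr 1) u := (pr 1).hasFDerivAt
  have h2 : HasFDerivAt (fun x : EuclideanSpace ℝ (Fin 3) => x 2) (pr 2) u := (pr 2).hasFDerivAt
  have h2u0 : (2 : ℝ) * u 0 ≠ 0 := by positivity
  have hinv : HasFDerivAt (fun x : EuclideanSpace ℝ (Fin 3) => (2 * x 0)⁻¹)
      ((-(((2 : ℝ) * u 0) ^ 2)⁻¹) • ((2:ℝ) • pr 0)) u :=
    (hasDerivAt_inv h2u0).comp_hasFDerivAt u (h0.const_mul 2)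
  have hPu : 0 < (γ - 1) * (u 2 - u 1 * u 1 * (2 * u 0)⁻¹) := by
    rw [show u 1 * u 1 * (2 * u 0)⁻¹ = u 1 ^ 2 / (2 * u 0) by ring]; exact hp
  have hP : HasFDerivAt
      (fun x : EuclideanSpace ℝ (Fin 3) => (γ - 1) * (x 2 - x 1 * x 1 * (2 * x 0)⁻¹)) _ u :=
    (h2.sub ((h1.mul h1).mul hinv)).const_mul (γ - 1)
  have hPs := hP.rpow_const (p := s) (Or.inl hPu.ne')
  have hx0p := h0.rpow_const (p := 1 - γ * s) (Or.inl hρ.ne')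
  have hF := (hPs.const_mul c).mul hx0p
  -- positivity transfer lemma
  have key : ∀ x : EuclideanSpace ℝ (Fin 3), 0 < x 0 →
      ((0:ℝ) < (γ - 1) * (x 2 - x 1 ^ 2 / (2 * x 0)) ↔
        0 < (γ - 1) * (x 2 * (2 * x 0) - x 1 ^ 2)) := by
    intro x hx0
    have h2x0 : (0:ℝ) < 2 * x 0 := by positivity
    have hEq : (γ - 1) * (x 2 * (2 * x 0) - x 1 ^ 2) =
        ((γ - 1) * (x 2 - x 1 ^ 2 / (2 * x 0))) * (2 * x 0) := by
      field_simp
    rw [hEq]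
    constructor
    · intro h; exact mul_pos h h2x0
    · intro h; nlinarith
  -- openness of the admissible set
  have hO : IsOpen {x : EuclideanSpace ℝ (Fin 3) |
      0 < x 0 ∧ 0 < (γ - 1) * (x 2 * (2 * x 0) - x 1 ^ 2)} := by
    have c0 : Continuous fun x : EuclideanSpace ℝ (Fin 3) => x 0 := (pr 0).continuous
    have c1 : Continuous fun x : EuclideanSpace ℝ (Fin 3) => x 1 := (pr 1).continuous
    have c2 : Continuous fun x : EuclideanSpace ℝ (Fin 3) => x 2 := (pr 2).continuous
    exact (isOpen_lt continuous_const c0).inter (isOpen_lt continuous_const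
      (continuous_const.mul ((c2.mul (continuous_const.mul c0)).sub (c1.pow 2))))
  -- eventual equality of the original function with the reparametrized one
  have heq : (fun x : EuclideanSpace ℝ (Fin 3) =>
        c * x 0 * ((γ - 1) * (x 2 - (x 1) ^ 2 / (2 * x 0)) / (x 0) ^ γ) ^ s) =ᶠ[nhds u]
      (fun x : EuclideanSpace ℝ (Fin 3) =>
        c * ((γ - 1) * (x 2 - x 1 * x 1 * (2 * x 0)⁻¹)) ^ s * (x 0) ^ (1 - γ * s)) := by
    filter_upwards [hO.mem_nhds ⟨hρ, (key u hρ).1 hp⟩] with x hx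
    obtain ⟨hx0, hx'⟩ := hx
    have hxP : 0 < (γ - 1) * (x 2 - x 1 ^ 2 / (2 * x 0)) := (key x hx0).2 hx'
    have hγx : (0:ℝ) < (x 0) ^ γ := Real.rpow_pos_of_pos hx0 γ
    rw [show x 1 * x 1 * (2 * x 0)⁻¹ = x 1 ^ 2 / (2 * x 0) by ring,
      Real.div_rpow hxP.le hγx.le, ← Real.rpow_mul hx0.le,
      Real.rpow_sub hx0, Real.rpow_one]
    ring
  have horig := hF.congr_of_eventuallyEq heq
  rw [hasGradientAt_iff_hasFDerivAt]
  convert horig using 1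
  · rfl
  refine ContinuousLinearMap.ext fun y => ?_
  simp only [InnerProductSpace.toDual_apply_apply, PiLp.inner_apply, RCLike.inner_apply,
    conj_trivial, Fin.sum_univ_three, WithLp.equiv_symm_apply, PiLp.toLp_apply, Matrix.cons_val_zero,
    Matrix.cons_val_one, Matrix.head_cons, Matrix.cons_val_two, Matrix.tail_cons,
    ContinuousLinearMap.add_apply, ContinuousLinearMap.smul_apply, ContinuousLinearMap.sub_apply,
    smul_eq_mul, Pi.mul_apply]
  have hpr : ∀ (i : Fin 3) (y : EuclideanSpace ℝ (Fin 3)), pr i y = y i := fun _ _ => rfl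
  simp only [hpr]
  simp only [show u 1 * u 1 * (2 * u 0)⁻¹ = u 1 ^ 2 / (2 * u 0) by ring]
  have hγu : (0:ℝ) < u 0 ^ γ := Real.rpow_pos_of_pos hρ γ
  rw [Real.div_rpow hp.le hγu.le, ← Real.rpow_mul hρ.le, Real.rpow_sub_one hp.ne']
  simp only [Real.rpow_sub hρ, Real.rpow_one]
  set P0 := (γ - 1) * (u 2 - u 1 ^ 2 / (2 * u 0)) with hP0
  set A := P0 ^ s with hA0
  set B := u 0 ^ (γ * s) with hB0
  have hB : (0:ℝ) < B := Real.rpow_pos_of_pos hρ _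
  have hA : (0:ℝ) < A := Real.rpow_pos_of_pos hp _
  rw [hc, hs]
  have h1' := hρ.ne'
  have h2' := hp.ne'
  have h3' := hB.ne'
  field_simp
  ring
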